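/- Let ε > 0 and let t ↦ (a(t), φ(t), p_a(t), p̃_φ(t)) be a C¹ solution of the system ȧ = R(a)p_a, φ̇ = F(a)(p̃_φ − a), ṗ_a = −R'(a)p_a²/2 − F'(a)(p̃_φ − a)²/2 + F(a)(p̃_φ − a), ṗ̃_φ = 0. Define â(t) = p̃_φ(t), φ̂(t) = φ(t) − p_a(t), p̂_a(t) = p_a(t)/ε, p̂_φ(t) = (p̃_φ(t) − a(t))/ε. Then (â, φ̂, p̂_a, p̂_φ) is a solution of the slow–fast system: dâ/dt = 0, dφ̂/dt = ε²(R'(â − εp̂_φ)p̂_a²/2 + F'(â − εp̂_φ)p̂_φ²/2), dp̂_a/dt = −εR'(â − εp̂_φ)p̂_a²/2 − εF'(â − εp̂_φ)p̂_φ²/2 + F(â − εp̂_φ)p̂_φ, dp̂_φ/dt = −R(â − εp̂_φ)p̂_a. -/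

import Mathlib

/-- The guiding-centre transformation composed with the momentum scaling
carries solutions of the magnetic system to solutions of the slow–fast system. -/
theorem stmt_3 (a₁ a₂ : ℝ) (R F : ℝ → ℝ)
    (hR : ContDiffOn ℝ 1 R (Set.Ioo a₁ a₂)) (hF : ContDiffOn ℝ 1 F (Set.Ioo a₁ a₂))
    (hRpos : ∀ x ∈ Set.Ioo a₁ a₂, 0 < R x) (hFpos : ∀ x ∈ Set.Ioo a₁ a₂, 0 < F x)
    (ε : ℝ) (hε : 0 < ε)
    (a φ pa pφ : ℝ → ℝ)
    (ha_mem : ∀ t : ℝ, a t ∈ Set.Ioo a₁ a₂)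
    (ha : ∀ t : ℝ, HasDerivAt a (R (a t) * pa t) t)
    (hφ : ∀ t : ℝ, HasDerivAt φ (F (a t) * (pφ t - a t)) t)
    (hpa : ∀ t : ℝ, HasDerivAt pa
      (-(deriv R (a t)) * (pa t) ^ 2 / 2 - deriv F (a t) * (pφ t - a t) ^ 2 / 2
        + F (a t) * (pφ t - a t)) t)
    (hpφ : ∀ t : ℝ, HasDerivAt pφ 0 t)
    (ahat φhat pahat pφhat : ℝ → ℝ)
    (hahat : ∀ t : ℝ, ahat t = pφ t)
    (hφhat : ∀ t : ℝ, φhat t = φ t - pa t)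
    (hpahat : ∀ t : ℝ, pahat t = pa t / ε)
    (hpφhat : ∀ t : ℝ, pφhat t = (pφ t - a t) / ε) :
    ∀ t : ℝ,
      HasDerivAt ahat 0 t
      ∧ HasDerivAt φhat
          (ε ^ 2 * (deriv R (ahat t - ε * pφhat t) * (pahat t) ^ 2 / 2
            + deriv F (ahat t - ε * pφhat t) * (pφhat t) ^ 2 / 2)) t
      ∧ HasDerivAt pahat
          (-ε * deriv R (ahat t - ε * pφhat t) * (pahat t) ^ 2 / 2
            - ε * deriv F (ahat t - ε * pφhat t) * (pφhat t) ^ 2 / 2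
            + F (ahat t - ε * pφhat t) * pφhat t) t
      ∧ HasDerivAt pφhat (-(R (ahat t - ε * pφhat t) * pahat t)) t := by
  intro t
  have hε' : ε ≠ 0 := ne_of_gt hε
  have key : ahat t - ε * pφhat t = a t := by
    rw [hahat, hpφhat]; field_simp; ring
  have hAhat : HasDerivAt ahat 0 t := by
    have := hpφ t
    exact this.congr_of_eventuallyEq (Filter.Eventually.of_forall hahat)
  have hΦhat : HasDerivAt φhat
      (F (a t) * (pφ t - a t)
        - (-(deriv R (a t)) * (pa t) ^ 2 / 2 - deriv F (a t) * (pφ t - a t) ^ 2 / 2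
          + F (a t) * (pφ t - a t))) t := by
    have := (hφ t).sub (hpa t)
    exact this.congr_of_eventuallyEq (Filter.Eventually.of_forall hφhat)
  have hPahat : HasDerivAt pahat
      ((-(deriv R (a t)) * (pa t) ^ 2 / 2 - deriv F (a t) * (pφ t - a t) ^ 2 / 2
        + F (a t) * (pφ t - a t)) / ε) t := by
    have := (hpa t).div_const ε
    exact this.congr_of_eventuallyEq (Filter.Eventually.of_forall hpahat)
  have hPφhat : HasDerivAt pφhat ((0 - R (a t) * pa t) / ε) t := by
    have := ((hpφ t).sub (ha t)).div_const ε
    exact this.congr_of_eventuallyEq (Filter.Eventually.of_forall hpφhat)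
  refine ⟨hAhat, ?_, ?_, ?_⟩
  · convert hΦhat using 1
    rw [key, hpahat, hpφhat]; field_simp; ring
  · convert hPahat using 1
    rw [key, hpahat, hpφhat]; field_simp
  · convert hPφhat using 1
    rw [key, hpahat]; field_simp; ring
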